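/- Let n be a natural number, x : Fin n → ℤ with x ≠ 0, and let S be a finite set of prime numbers. For each p ∈ S let y_p = |{v : x_v ≠ 0 and p divides x_v}|. Then Σ_{p ∈ S} y_p · log p ≤ ‖x‖₀ · log(‖x‖₁ / ‖x‖₀). In particular, if S is nonempty and p_* = min S, then Σ_{p ∈ S} y_p ≤ ‖x‖₀ · log(‖x‖₁/‖x‖₀) / log p_*. -/

import Mathlib

open Finset

theorem stmt_12 (n : ℕ) (x : Fin n → ℤ) (hx : x ≠ 0)
    (S : Finset ℕ) (hSprime : ∀ p ∈ S, p.Prime) :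
    (∑ p ∈ S, ((Finset.univ.filter fun v => x v ≠ 0 ∧ (p : ℤ) ∣ x v).card : ℝ)
        * Real.log p
      ≤ ((Finset.univ.filter fun v => x v ≠ 0).card : ℝ) *
        Real.log (((∑ v, |x v| : ℤ) : ℝ) /
          ((Finset.univ.filter fun v => x v ≠ 0).card : ℝ))) ∧
    (∀ hS : S.Nonempty,
      ∑ p ∈ S, ((Finset.univ.filter fun v => x v ≠ 0 ∧ (p : ℤ) ∣ x v).card : ℝ)
        ≤ ((Finset.univ.filter fun v => x v ≠ 0).card : ℝ) *
          Real.log (((∑ v, |x v| : ℤ) : ℝ) /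
            ((Finset.univ.filter fun v => x v ≠ 0).card : ℝ)) /
          Real.log (S.min' hS)) := by
  classical
  set T : Finset (Fin n) := Finset.univ.filter fun v => x v ≠ 0 with hT
  have hTne : T.Nonempty := by
    obtain ⟨v, hv⟩ : ∃ v, x v ≠ 0 := by
      by_contra h
      push_neg at h
      exact hx (funext h)
    exact ⟨v, by simp [hT, hv]⟩
  have hk0 : (0 : ℝ) < (T.card : ℝ) := by
    exact_mod_cast Finset.card_pos.mpr hTne
  -- sum over T equals full sum
  have hsum : ∑ v ∈ T, |x v| = ∑ v, |x v| := by
    apply Finset.sum_subset (Finset.subset_univ _)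
    intro v _ hv
    simp [hT] at hv
    simp [hv]
  -- each |x v| ≥ 1 on T
  have hone : ∀ v ∈ T, (1 : ℝ) ≤ (|x v| : ℝ) := by
    intro v hv
    simp [hT] at hv
    exact_mod_cast Int.one_le_abs (by simpa using hv)
  -- step 1 : for v ∈ T, ∑_{p ∈ S, p ∣ x v} log p ≤ log |x v|
  have step1 : ∀ v ∈ T, ∑ p ∈ S.filter (fun p : ℕ => (p : ℤ) ∣ x v), Real.log p
      ≤ Real.log (|x v| : ℝ) := by
    intro v hv
    simp only [hT, mem_filter] at hv
    set S' := S.filter (fun p : ℕ => (p : ℤ) ∣ x v)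
    have hdvd : (∏ p ∈ S', p) ∣ (x v).natAbs := by
      apply Finset.prod_primes_dvd
      · intro p hp
        exact (hSprime p (Finset.mem_filter.mp hp).1).prime
      · intro p hp
        have := (Finset.mem_filter.mp hp).2
        exact Int.natAbs_dvd_natAbs.mpr (by simpa using this)
    have hle : (∏ p ∈ S', p) ≤ (x v).natAbs :=
      Nat.le_of_dvd (Int.natAbs_pos.mpr hv.2) hdvd
    have hpos : ∀ p ∈ S', (0 : ℝ) < (p : ℝ) := fun p hp => by
      exact_mod_cast (hSprime p (Finset.mem_filter.mp hp).1).pos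
    calc ∑ p ∈ S', Real.log p = Real.log (∏ p ∈ S', (p : ℝ)) := by
          rw [Real.log_prod (fun p hp => (hpos p hp).ne')]
      _ ≤ Real.log (|x v| : ℝ) := by
          apply Real.log_le_log (Finset.prod_pos hpos)
          calc (∏ p ∈ S', (p : ℝ)) = ((∏ p ∈ S', p : ℕ) : ℝ) := by push_cast; ring
            _ ≤ ((x v).natAbs : ℝ) := by exact_mod_cast hle
            _ = |(x v : ℝ)| := by simp [Nat.cast_natAbs]
  -- step 2 : swap
  have swap : ∑ p ∈ S, ((Finset.univ.filter fun v => x v ≠ 0 ∧ (p : ℤ) ∣ x v).card : ℝ)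
      * Real.log p = ∑ v ∈ T, ∑ p ∈ S.filter (fun p : ℕ => (p : ℤ) ∣ x v), Real.log p := by
    have h1 : ∀ p : ℕ, (Finset.univ.filter fun v => x v ≠ 0 ∧ (p : ℤ) ∣ x v)
        = T.filter (fun v => (p : ℤ) ∣ x v) := by
      intro p; ext v; simp [hT, and_assoc]
    simp_rw [h1]
    have h2 : ∀ p : ℕ, ((T.filter (fun v => (p:ℤ) ∣ x v)).card : ℝ) * Real.log p
        = ∑ v ∈ T.filter (fun v => (p:ℤ) ∣ x v), Real.log p := fun p => by
      simp [Finset.sum_const, nsmul_eq_mul]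
    simp_rw [h2]
    exact Finset.sum_comm' (s := S) (t := fun p => T.filter (fun v => (p:ℤ) ∣ x v))
      (t' := T) (s' := fun v => S.filter (fun p : ℕ => (p:ℤ) ∣ x v))
      (f := fun (p : ℕ) (_ : Fin n) => Real.log (p : ℝ))
      (fun p v => by simp only [Finset.mem_filter]; tauto)
  -- step 3 : Jensen
  have jensen : ∑ v ∈ T, Real.log (|x v| : ℝ) ≤
      (T.card : ℝ) * Real.log (((∑ v, |x v| : ℤ) : ℝ) / (T.card : ℝ)) := by
    have hj := (strictConcaveOn_log_Ioi.concaveOn).le_map_sum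
      (t := T) (w := fun _ => 1 / (T.card : ℝ)) (p := fun v => (|x v| : ℝ))
      (fun i _ => by positivity)
      (by rw [Finset.sum_const, nsmul_eq_mul, mul_one_div_cancel hk0.ne'])
      (fun i hi => lt_of_lt_of_le one_pos (hone i hi))
    simp only [smul_eq_mul] at hj
    have heq : ∑ i ∈ T, 1 / (T.card : ℝ) * (|x i| : ℝ)
        = ((∑ v, |x v| : ℤ) : ℝ) / (T.card : ℝ) := by
      rw [← Finset.mul_sum]
      rw [← hsum]
      push_cast
      ring
    rw [heq, ← Finset.mul_sum] at hj
    calc ∑ v ∈ T, Real.log (|x v| : ℝ)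
        = (T.card : ℝ) * (1 / (T.card : ℝ) * ∑ v ∈ T, Real.log (|x v| : ℝ)) := by
          field_simp
      _ ≤ _ := by
          exact mul_le_mul_of_nonneg_left hj hk0.le
  have main : ∑ p ∈ S, ((Finset.univ.filter fun v => x v ≠ 0 ∧ (p : ℤ) ∣ x v).card : ℝ)
      * Real.log p ≤ (T.card : ℝ) * Real.log (((∑ v, |x v| : ℤ) : ℝ) / (T.card : ℝ)) := by
    rw [swap]
    exact le_trans (Finset.sum_le_sum step1) jensen
  refine ⟨main, fun hS => ?_⟩
  have hp' := hSprime _ (S.min'_mem hS)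
  have hlogp : 0 < Real.log (S.min' hS : ℝ) := by
    apply Real.log_pos
    exact_mod_cast hp'.one_lt
  rw [le_div_iff₀ hlogp]
  calc (∑ p ∈ S, ((Finset.univ.filter fun v => x v ≠ 0 ∧ (p : ℤ) ∣ x v).card : ℝ))
      * Real.log (S.min' hS : ℝ)
      = ∑ p ∈ S, ((Finset.univ.filter fun v => x v ≠ 0 ∧ (p : ℤ) ∣ x v).card : ℝ)
        * Real.log (S.min' hS : ℝ) := by rw [Finset.sum_mul]
    _ ≤ ∑ p ∈ S, ((Finset.univ.filter fun v => x v ≠ 0 ∧ (p : ℤ) ∣ x v).card : ℝ)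
        * Real.log p := by
        apply Finset.sum_le_sum
        intro p hp
        apply mul_le_mul_of_nonneg_left _ (by positivity)
        apply Real.log_le_log (by exact_mod_cast hp'.pos)
        exact_mod_cast S.min'_le p hp
    _ ≤ _ := main
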